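/- Let R be a semilocal ring (R/rad(R) is left Artinian), q ∈ R, and I a left ideal of R. If I + Rq = R, then the coset I + q contains a unit of R. -/

import Mathlib

open Submodule LinearMap Function

namespace BassAux

section ModuleHelpers
variable {R : Type*} [Ring R] {M : Type*} [AddCommGroup M] [Module R M]

/-- A submodule disjoint from `S` is isomorphic to its image in `M ⧸ S`. -/
noncomputable def mapMkQEquiv (S N : Submodule R M) (h : S ⊓ N = ⊥) :
    N ≃ₗ[R] (N.map S.mkQ) := by
  have hker : LinearMap.ker (S.mkQ ∘ₗ N.subtype) = ⊥ := by
    rw [LinearMap.ker_comp, Submodule.ker_mkQ, Submodule.eq_bot_iff]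
    rintro ⟨x, hxN⟩ hx
    have : x ∈ S ⊓ N := ⟨hx, hxN⟩
    rw [h, Submodule.mem_bot] at this
    exact Subtype.ext this
  refine (LinearEquiv.ofInjective _ (LinearMap.ker_eq_bot.mp hker)).trans
    (LinearEquiv.ofEq _ _ ?_)
  rw [LinearMap.range_comp, Submodule.range_subtype]

/-- If `U ≃ V` and both are disjoint from `C`, then `U ⊔ C ≃ V ⊔ C`. -/
noncomputable def supEquiv {U V C : Submodule R M} (e : U ≃ₗ[R] V)
    (hU : U ⊓ C = ⊥) (hV : V ⊓ C = ⊥) :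
    (U ⊔ C : Submodule R M) ≃ₗ[R] (V ⊔ C : Submodule R M) := by
  let fU : (U × C) →ₗ[R] M := U.subtype.coprod C.subtype
  let fV : (U × C) →ₗ[R] M := (V.subtype ∘ₗ e.toLinearMap).coprod C.subtype
  have hinjU : Injective fU := by
    rw [← LinearMap.ker_eq_bot, Submodule.eq_bot_iff]
    rintro ⟨u, c⟩ huc
    have h1 : (u : M) + (c : M) = 0 := huc
    have h2 : (u : M) ∈ U ⊓ C := ⟨u.2, by rw [eq_neg_of_add_eq_zero_left h1]; exact neg_mem c.2⟩
    rw [hU, Submodule.mem_bot] at h2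
    have h3 : (c : M) = 0 := by rw [h2, zero_add] at h1; exact h1
    exact Prod.ext (Subtype.ext h2) (Subtype.ext h3)
  have hinjV : Injective fV := by
    rw [← LinearMap.ker_eq_bot, Submodule.eq_bot_iff]
    rintro ⟨u, c⟩ huc
    have h1 : ((e u : V) : M) + (c : M) = 0 := huc
    have h2 : ((e u : V) : M) ∈ V ⊓ C :=
      ⟨(e u).2, by rw [eq_neg_of_add_eq_zero_left h1]; exact neg_mem c.2⟩
    rw [hV, Submodule.mem_bot] at h2
    have h3 : (c : M) = 0 := by rw [h2, zero_add] at h1; exact h1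
    have h4 : e u = 0 := Subtype.ext h2
    have h5 : u = 0 := by simpa using congrArg e.symm h4
    exact Prod.ext h5 (Subtype.ext h3)
  have hrU : LinearMap.range fU = U ⊔ C := by
    rw [LinearMap.range_coprod, Submodule.range_subtype, Submodule.range_subtype]
  have hrV : LinearMap.range fV = V ⊔ C := by
    rw [LinearMap.range_coprod, Submodule.range_subtype, LinearMap.range_comp,
      LinearEquiv.range, Submodule.map_top, Submodule.range_subtype]
  exact (LinearEquiv.ofEq _ _ hrU.symm).trans <|
    ((LinearEquiv.ofInjective fU hinjU).symm.trans (LinearEquiv.ofInjective fV hinjV)).trans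
      (LinearEquiv.ofEq _ _ hrV)

/-- Base case of cancellation: quotients by isomorphic simple submodules are isomorphic. -/
theorem quot_equiv_of_simple_equiv [IsSemisimpleModule R M] {U V : Submodule R M}
    (hU : IsSimpleModule R U) (e : U ≃ₗ[R] V) :
    Nonempty ((M ⧸ U) ≃ₗ[R] (M ⧸ V)) := by
  have hUa : IsAtom U := isSimpleModule_iff_isAtom.mp hU
  haveI := hU
  have hVa : IsAtom V := isSimpleModule_iff_isAtom.mp (IsSimpleModule.congr e.symm)
  by_cases hUV : U = V
  · exact ⟨Submodule.quotEquivOfEq _ _ hUV⟩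
  -- U ⊓ V = ⊥
  have hdis : U ⊓ V = ⊥ := by
    rcases lt_or_eq_of_le (inf_le_left : U ⊓ V ≤ U) with hlt | heq
    · exact hUa.2 _ hlt
    · exact absurd (hVa.le_iff_eq hUa.1 |>.mp (heq ▸ inf_le_right : U ≤ V)) hUV
  obtain ⟨C, hC⟩ := exists_isCompl (U ⊔ V)
  have hUC : U ⊓ C = ⊥ := by
    rw [← le_bot_iff, ← hC.disjoint.eq_bot]
    exact inf_le_inf_right _ le_sup_left
  have hVC : V ⊓ C = ⊥ := by
    rw [← le_bot_iff, ← hC.disjoint.eq_bot]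
    exact inf_le_inf_right _ le_sup_right
  have h1 : IsCompl U (V ⊔ C) := by
    constructor
    · rw [disjoint_iff, Submodule.eq_bot_iff]
      intro x ⟨hxU, hxVC⟩
      obtain ⟨v, hv, c, hc, rfl⟩ := Submodule.mem_sup.mp hxVC
      have hcm : c ∈ (U ⊔ V) ⊓ C := ⟨by
        have h' : c = (v + c) - v := by abel
        rw [h']
        exact sub_mem ((le_sup_left : U ≤ U ⊔ V) hxU) ((le_sup_right : V ≤ U ⊔ V) hv), hc⟩
      rw [hC.disjoint.eq_bot, Submodule.mem_bot] at hcm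
      subst hcm
      have : v ∈ U ⊓ V := ⟨by simpa using hxU, hv⟩
      rw [hdis, Submodule.mem_bot] at this
      simp [this]
    · rw [codisjoint_iff, ← sup_assoc, hC.codisjoint.eq_top]
  have h2 : IsCompl V (U ⊔ C) := by
    constructor
    · rw [disjoint_iff, Submodule.eq_bot_iff]
      intro x ⟨hxV, hxUC⟩
      obtain ⟨u, hu, c, hc, rfl⟩ := Submodule.mem_sup.mp hxUC
      have hcm : c ∈ (U ⊔ V) ⊓ C := ⟨by
        have h' : c = (u + c) - u := by abel
        rw [h']
        exact sub_mem ((le_sup_right : V ≤ U ⊔ V) hxV) ((le_sup_left : U ≤ U ⊔ V) hu), hc⟩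
      rw [hC.disjoint.eq_bot, Submodule.mem_bot] at hcm
      subst hcm
      have : u ∈ U ⊓ V := ⟨hu, by simpa using hxV⟩
      rw [hdis, Submodule.mem_bot] at this
      simp [this]
    · rw [codisjoint_iff, ← sup_assoc, sup_comm V U, hC.codisjoint.eq_top]
  exact ⟨(Submodule.quotientEquivOfIsCompl U (V ⊔ C) h1).trans <|
    ((supEquiv e.symm hVC hUC).trans
      (Submodule.quotientEquivOfIsCompl V (U ⊔ C) h2).symm)⟩

/-- Cancellation: in a semisimple artinian module, isomorphic submodules have
isomorphic quotients. -/
theorem quot_equiv_of_equiv [IsSemisimpleModule R M] [IsArtinian R M] :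
    ∀ A B : Submodule R M, Nonempty (A ≃ₗ[R] B) → Nonempty ((M ⧸ A) ≃ₗ[R] (M ⧸ B)) := by
  intro A
  induction A using WellFoundedLT.induction with
  | _ A IH =>
  rintro B ⟨f⟩
  rcases IsSemisimpleModule.eq_bot_or_exists_simple_le A with hA | ⟨S, hSA, hS⟩
  · subst hA
    have hsub : Subsingleton B := by
      have : Subsingleton (⊥ : Submodule R M) := by infer_instance
      exact f.toEquiv.symm.subsingleton
    have hB : B = ⊥ := by
      rw [Submodule.eq_bot_iff]
      intro x hx
      have : (⟨x, hx⟩ : B) = 0 := Subsingleton.elim _ _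
      simpa using congrArg Subtype.val this
    exact ⟨Submodule.quotEquivOfEq _ _ hB.symm⟩
  · haveI := hS
    have hSbot : S ≠ ⊥ := (isSimpleModule_iff_isAtom.mp hS).1
    obtain ⟨C, hC⟩ := exists_isCompl S
    set A₁ := C ⊓ A with hA₁def
    have hA₁le : A₁ ≤ A := inf_le_right
    have hSA₁_inf : S ⊓ A₁ = ⊥ := by
      rw [← le_bot_iff, ← hC.disjoint.eq_bot]
      exact le_inf inf_le_left (inf_le_right.trans inf_le_left)
    have hSA₁_sup : S ⊔ A₁ = A := by
      rw [hA₁def, ← sup_inf_assoc_of_le _ hSA, hC.codisjoint.eq_top, top_inf_eq]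
    have hA₁lt : A₁ < A := by
      refine lt_of_le_of_ne hA₁le fun hEq => hSbot ?_
      rw [← le_bot_iff, ← hSA₁_inf]
      exact le_inf le_rfl (hEq ▸ hSA)
    -- transfer the decomposition through f
    set SA : Submodule R A := S.comap A.subtype with hSAdef
    set A₁A : Submodule R A := A₁.comap A.subtype with hA₁Adef
    have hsubinj : Injective A.subtype := Subtype.coe_injective
    have hin1 : SA ⊓ A₁A = ⊥ := by
      rw [hSAdef, hA₁Adef, ← Submodule.comap_inf, hSA₁_inf]
      rw [Submodule.comap_bot, Submodule.ker_subtype]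
    have hin2 : SA ⊔ A₁A = ⊤ := by
      apply Submodule.map_injective_of_injective hsubinj
      rw [Submodule.map_sup, hSAdef, hA₁Adef, Submodule.map_comap_subtype,
        Submodule.map_comap_subtype, Submodule.map_top, Submodule.range_subtype,
        inf_eq_right.mpr hSA, inf_eq_right.mpr hA₁le, hSA₁_sup]
    set SB : Submodule R B := SA.map (f : A →ₗ[R] B) with hSBdef
    set B₁B : Submodule R B := A₁A.map (f : A →ₗ[R] B) with hB₁Bdef
    have hfinj : Injective (f : A →ₗ[R] B) := f.injective
    have hBsubinj : Injective B.subtype := Subtype.coe_injective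
    have hin1' : SB ⊓ B₁B = ⊥ := by
      rw [hSBdef, hB₁Bdef, ← Submodule.map_inf _ hfinj, hin1, Submodule.map_bot]
    have hin2' : SB ⊔ B₁B = ⊤ := by
      rw [hSBdef, hB₁Bdef, ← Submodule.map_sup, hin2, Submodule.map_top, LinearEquiv.range]
    set S' : Submodule R M := SB.map B.subtype with hS'def
    set B₁ : Submodule R M := B₁B.map B.subtype with hB₁def
    have hB₁le : B₁ ≤ B := Submodule.map_subtype_le _ _
    have hS'B : S' ≤ B := Submodule.map_subtype_le _ _
    have hin1'' : S' ⊓ B₁ = ⊥ := by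
      rw [hS'def, hB₁def, ← Submodule.map_inf _ hBsubinj, hin1', Submodule.map_bot]
    have hin2'' : S' ⊔ B₁ = B := by
      rw [hS'def, hB₁def, ← Submodule.map_sup, hin2', Submodule.map_top,
        Submodule.range_subtype]
    -- isomorphisms S ≃ S' and A₁ ≃ B₁
    let eS : S ≃ₗ[R] S' :=
      ((Submodule.comapSubtypeEquivOfLe hSA).symm.trans
        (f.submoduleMap SA)).trans (Submodule.equivMapOfInjective B.subtype hBsubinj SB)
    let eA₁ : A₁ ≃ₗ[R] B₁ :=
      ((Submodule.comapSubtypeEquivOfLe hA₁le).symm.trans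
        (f.submoduleMap A₁A)).trans (Submodule.equivMapOfInjective B.subtype hBsubinj B₁B)
    obtain ⟨h⟩ := IH A₁ hA₁lt B₁ ⟨eA₁⟩
    -- simple submodules in the quotients
    set U : Submodule R (M ⧸ A₁) := A.map A₁.mkQ with hUdef
    set W : Submodule R (M ⧸ B₁) := B.map B₁.mkQ with hWdef
    set V : Submodule R (M ⧸ A₁) := W.map (h.symm : (M ⧸ B₁) →ₗ[R] (M ⧸ A₁)) with hVdef
    have hmapA₁ : A₁.map A₁.mkQ = ⊥ := by
      rw [← le_bot_iff, Submodule.map_le_iff_le_comap, Submodule.comap_bot, Submodule.ker_mkQ]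
    have hmapB₁ : B₁.map B₁.mkQ = ⊥ := by
      rw [← le_bot_iff, Submodule.map_le_iff_le_comap, Submodule.comap_bot, Submodule.ker_mkQ]
    have hU_eq : S.map A₁.mkQ = U := by
      rw [hUdef, ← hSA₁_sup, Submodule.map_sup, hmapA₁, sup_bot_eq]
    have hW_eq : S'.map B₁.mkQ = W := by
      rw [hWdef, ← hin2'', Submodule.map_sup, hmapB₁, sup_bot_eq]
    have hA₁S : A₁ ⊓ S = ⊥ := by rwa [inf_comm] at hSA₁_inf
    have hB₁S' : B₁ ⊓ S' = ⊥ := by rwa [inf_comm] at hin1''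
    let eU : S ≃ₗ[R] U := (mapMkQEquiv A₁ S hA₁S).trans (LinearEquiv.ofEq _ _ hU_eq)
    let eW : S' ≃ₗ[R] W := (mapMkQEquiv B₁ S' hB₁S').trans (LinearEquiv.ofEq _ _ hW_eq)
    let eV : W ≃ₗ[R] V := h.symm.submoduleMap W
    haveI hUsimple : IsSimpleModule R U := IsSimpleModule.congr eU.symm
    obtain ⟨g⟩ := quot_equiv_of_simple_equiv hUsimple (eU.symm.trans (eS.trans (eW.trans eV)))
    have hVW : V.map (h : (M ⧸ A₁) →ₗ[R] (M ⧸ B₁)) = W :=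
      (Submodule.map_symm_eq_iff h).mp hVdef.symm
    exact ⟨((Submodule.quotientQuotientEquivQuotient A₁ A hA₁le).symm.trans
      (g.trans ((Submodule.Quotient.equiv V W h hVW).trans
      (Submodule.quotientQuotientEquivQuotient B₁ B hB₁le))))⟩

/-- An artinian module whose coatoms separate points is semisimple. -/
theorem semisimple_of_coatoms [IsArtinian R M]
    (h : ∀ m : M, m ≠ 0 → ∃ N : Submodule R M, IsCoatom N ∧ m ∉ N) :
    IsSemisimpleModule R M := by
  classical
  let 𝒮 : Set (Submodule R M) :=
    {N | ∃ s : Finset (Submodule R M), (∀ c ∈ s, IsCoatom c) ∧ N = s.inf id}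
  obtain ⟨N₀, hN₀mem, hmin⟩ := IsArtinian.set_has_minimal 𝒮 ⟨⊤, ∅, by simp, by simp⟩
  obtain ⟨s, hs, rfl⟩ := hN₀mem
  have hbot : s.inf id = ⊥ := by
    by_contra hne
    obtain ⟨m, hm, hm0⟩ := Submodule.exists_mem_ne_zero_of_ne_bot hne
    obtain ⟨c, hc, hmc⟩ := h m hm0
    refine hmin (s.inf id ⊓ c) ⟨insert c s, fun d hd => ?_, by
      rw [Finset.inf_insert]; exact (inf_comm _ _)⟩ ?_
    · rcases Finset.mem_insert.mp hd with rfl | hd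
      · exact hc
      · exact hs d hd
    · exact lt_of_le_of_ne inf_le_left fun hEq =>
        hmc ((show m ∈ s.inf id ⊓ c by rw [hEq]; exact hm).2)
  -- embed M into a finite product of simple modules
  let f : M →ₗ[R] (∀ c : s, M ⧸ (c : Submodule R M)) :=
    LinearMap.pi fun c => (c : Submodule R M).mkQ
  have hker : LinearMap.ker f = ⊥ := by
    rw [LinearMap.ker_pi]
    have : ⨅ c : s, LinearMap.ker (c : Submodule R M).mkQ = ⨅ c : s, (c : Submodule R M) := by
      simp [Submodule.ker_mkQ]
    rw [this, ← hbot, Finset.inf_eq_iInf, iInf_subtype]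
    rfl
  haveI hsimp : ∀ c : s, IsSimpleModule R (M ⧸ (c : Submodule R M)) := fun c =>
    isSimpleModule_iff_isCoatom.mpr (hs c c.2)
  haveI : IsSemisimpleModule R (∀ c : s, M ⧸ (c : Submodule R M)) := by
    refine isSemisimpleModule_of_isSemisimpleModule_submodule'
      (p := fun c => LinearMap.range (LinearMap.single R _ c)) (fun c => ?_)
      (LinearMap.iSup_range_single R _)
    haveI : IsSemisimpleModule R (M ⧸ (c : Submodule R M)) := by
      haveI := hsimp c
      infer_instance
    exact IsSemisimpleModule.congr
      (LinearEquiv.ofInjective _ (Pi.single_injective (M := fun c : s => M ⧸ (c : Submodule R M)) c)).symm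
  exact IsSemisimpleModule.congr (LinearEquiv.ofInjective f (LinearMap.ker_eq_bot.mp hker))

end ModuleHelpers

section JacobsonHelpers
variable {R : Type*} [Ring R]

theorem exists_left_inv_one_sub_of_mem_jacobson {x : R}
    (hx : x ∈ Ideal.jacobson (⊥ : Ideal R)) : ∃ z : R, z * (1 - x) = 1 := by
  obtain ⟨z, hz⟩ := Ideal.mem_jacobson_iff.mp hx (-1)
  refine ⟨z, ?_⟩
  rw [Ideal.mem_bot] at hz
  have h3 : z * (-1) * x = -(z * x) := by rw [mul_neg_one, neg_mul]
  rw [h3] at hz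
  have h4 : z - z * x = 1 := by
    have := sub_eq_zero.mp hz
    rwa [neg_add_eq_sub] at this
  rw [mul_one_sub]
  exact h4

/-- In any ring, `1 - x` is a unit when `x` is in the Jacobson radical. -/
theorem isUnit_one_sub_of_mem_jacobson {x : R}
    (hx : x ∈ Ideal.jacobson (⊥ : Ideal R)) : IsUnit (1 - x) := by
  obtain ⟨z, hz⟩ := exists_left_inv_one_sub_of_mem_jacobson hx
  have hzj : z * x ∈ Ideal.jacobson (⊥ : Ideal R) := Ideal.mul_mem_left _ _ hx
  obtain ⟨w, hw⟩ := exists_left_inv_one_sub_of_mem_jacobson (neg_mem hzj)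
  have hwz : w * z = 1 := by
    have h1 : z = 1 + z * x := by
      have h2 : z - z * x = 1 := by rwa [mul_one_sub] at hz
      rw [← h2]; abel
    calc w * z = w * (1 - -(z * x)) := by rw [sub_neg_eq_add, ← h1]
    _ = 1 := hw
  have hw' : w = 1 - x := by
    calc w = w * (z * (1 - x)) := by rw [hz, mul_one]
    _ = (w * z) * (1 - x) := by rw [mul_assoc]
    _ = 1 - x := by rw [hwz, one_mul]
  exact ⟨⟨1 - x, z, by rw [← hw', hwz], hz⟩, rfl⟩

end JacobsonHelpers

end BassAux

open BassAux

/-- Bass' Theorem: if `R` is semilocal (i.e. `R / rad(R)` is left Artinian, where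
`rad(R)` is the Jacobson radical), `q ∈ R` and `I` is a left ideal with `I + Rq = R`,
then the coset `I + q` contains a unit of `R`. -/
theorem bass_coset_contains_unit {R : Type*} [Ring R]
    (hsemilocal : IsArtinian R (R ⧸ (Ideal.jacobson (⊥ : Ideal R))))
    (q : R) (I : Ideal R) (h : I ⊔ Ideal.span {q} = ⊤) :
    ∃ i ∈ I, IsUnit (i + q) := by
  classical
  set J : Ideal R := Ideal.jacobson (⊥ : Ideal R) with hJdef
  haveI : IsArtinian R (R ⧸ J) := hsemilocal
  set π : R →ₗ[R] R ⧸ J := J.mkQ with hπdef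
  -- R ⧸ J is a semisimple R-module
  haveI hss : IsSemisimpleModule R (R ⧸ J) := by
    apply semisimple_of_coatoms
    intro m hm
    obtain ⟨x, rfl⟩ := Submodule.Quotient.mk_surjective J m
    have hxJ : x ∉ J := fun hx => hm ((Submodule.Quotient.mk_eq_zero J).mpr hx)
    have : ¬ ∀ 𝔪 ∈ {K : Ideal R | ⊥ ≤ K ∧ K.IsMaximal}, x ∈ 𝔪 := by
      intro hall
      exact hxJ (Submodule.mem_sInf.mpr hall)
    push_neg at this
    obtain ⟨𝔪, ⟨-, hmax⟩, hxm⟩ := this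
    have hJm : J ≤ 𝔪 := sInf_le ⟨bot_le, hmax⟩
    have hcoatom𝔪 : IsCoatom 𝔪 := Ideal.isMaximal_def.mp hmax
    have hπsurj : Surjective π := Submodule.mkQ_surjective J
    refine ⟨Submodule.map π 𝔪, ?_, ?_⟩
    · have hcomap : Submodule.comap π (Submodule.map π 𝔪) = 𝔪 := by
        rw [Submodule.comap_map_eq, Submodule.ker_mkQ, sup_eq_left.mpr hJm]
      constructor
      · intro htop
        rw [htop, Submodule.comap_top] at hcomap
        exact hcoatom𝔪.1 hcomap.symm
      · intro b hb
        have hlt : 𝔪 < Submodule.comap π b := by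
          rw [← hcomap]
          refine lt_of_le_of_ne (Submodule.comap_mono hb.le) fun hle => hb.ne ?_
          exact Submodule.comap_injective_of_surjective hπsurj hle
        have h2 := congrArg (Submodule.map π) (hcoatom𝔪.2 _ hlt)
        rwa [Submodule.map_comap_eq_of_surjective hπsurj,
          Submodule.map_top, Submodule.range_mkQ] at h2
    · intro hmem
      obtain ⟨y, hy, hyx⟩ := Submodule.mem_map.mp hmem
      have : x - y ∈ J := (Submodule.Quotient.eq J).mp hyx.symm
      exact hxm (by simpa using add_mem hy (hJm this))
  -- right multiplication by q on R ⧸ J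
  have hqJ : ∀ x ∈ J, x * q ∈ J := fun x hx =>
    Ideal.mul_mem_right q (Ideal.jacobson (⊥ : Ideal R)) hx
  set ρ : (R ⧸ J) →ₗ[R] (R ⧸ J) :=
    J.liftQ (π ∘ₗ LinearMap.toSpanSingleton R R q)
      (fun x hx => by
        simp only [LinearMap.mem_ker, LinearMap.comp_apply, LinearMap.toSpanSingleton_apply,
          smul_eq_mul, hπdef]
        exact (Submodule.Quotient.mk_eq_zero J).mpr (hqJ x hx)) with hρdef
  have hρ : ∀ r : R, ρ (π r) = π (r * q) := fun r => rfl
  set Ibar : Submodule R (R ⧸ J) := Submodule.map π I with hIbardef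
  -- Ibar ⊔ range ρ = ⊤
  have hsup : Ibar ⊔ LinearMap.range ρ = ⊤ := by
    have h2 : Submodule.map π (I ⊔ Ideal.span {q}) = ⊤ := by
      rw [h, Submodule.map_top, Submodule.range_mkQ]
    rw [Submodule.map_sup] at h2
    have h3 : Submodule.map π (Ideal.span {q}) ≤ LinearMap.range ρ := by
      have hspan : (Ideal.span {q} : Submodule R R) = LinearMap.range
          (LinearMap.toSpanSingleton R R q) := LinearMap.span_singleton_eq_range R R q
      rw [hspan, ← LinearMap.range_comp]
      have hcomp : π ∘ₗ LinearMap.toSpanSingleton R R q = ρ ∘ₗ π :=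
        LinearMap.ext fun r => (hρ r).symm
      rw [hcomp]
      exact LinearMap.range_comp_le_range π ρ
    refine le_antisymm le_top ?_
    rw [← h2]
    exact sup_le_sup le_rfl h3
  -- construct the bijective endomorphism φ of R ⧸ J
  set g : (R ⧸ J) →ₗ[R] (R ⧸ J) ⧸ Ibar := Ibar.mkQ ∘ₗ ρ with hgdef
  have hgsurj : Surjective g := by
    rw [← LinearMap.range_eq_top, hgdef, LinearMap.range_comp]
    have h4 : Submodule.map Ibar.mkQ (Ibar ⊔ LinearMap.range ρ) = ⊤ := by
      rw [hsup, Submodule.map_top, Submodule.range_mkQ]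
    rw [Submodule.map_sup] at h4
    have h5 : Submodule.map Ibar.mkQ Ibar = ⊥ := by
      rw [← le_bot_iff, Submodule.map_le_iff_le_comap, Submodule.comap_bot, Submodule.ker_mkQ]
    rwa [h5, bot_sup_eq] at h4
  set K : Submodule R (R ⧸ J) := LinearMap.ker g with hKdef
  obtain ⟨P, hKP⟩ := exists_isCompl K
  have hdecomp : ∀ m : R ⧸ J, ∃ (k : K) (p : P), m = ↑k + ↑p := by
    intro m
    have : m ∈ K ⊔ P := by rw [hKP.sup_eq_top]; trivial
    obtain ⟨k, hk, p, hp, hkp⟩ := Submodule.mem_sup.mp this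
    exact ⟨⟨k, hk⟩, ⟨p, hp⟩, hkp.symm⟩
  -- P is isomorphic to (R ⧸ J) ⧸ Ibar
  have hPinj : Injective (g ∘ₗ P.subtype) := by
    rw [← LinearMap.ker_eq_bot, Submodule.eq_bot_iff]
    rintro ⟨p, hpP⟩ hp
    have : p ∈ K ⊓ P := ⟨hp, hpP⟩
    rw [hKP.inf_eq_bot, Submodule.mem_bot] at this
    exact Subtype.ext this
  have hPsurj : Surjective (g ∘ₗ P.subtype) := by
    intro y
    obtain ⟨m, rfl⟩ := hgsurj y
    obtain ⟨k, p, rfl⟩ := hdecomp m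
    refine ⟨p, ?_⟩
    have hk0 : g ↑k = 0 := k.2
    simp [hk0]
  let eP : P ≃ₗ[R] ((R ⧸ J) ⧸ Ibar) := LinearEquiv.ofBijective _ ⟨hPinj, hPsurj⟩
  obtain ⟨P', hP'⟩ := exists_isCompl Ibar
  let eP' : ((R ⧸ J) ⧸ Ibar) ≃ₗ[R] P' := Submodule.quotientEquivOfIsCompl Ibar P' hP'
  obtain ⟨hKI⟩ := quot_equiv_of_equiv P P' ⟨eP.trans eP'⟩
  let θ : K ≃ₗ[R] Ibar :=
    ((Submodule.quotientEquivOfIsCompl P K hKP.symm).symm.trans hKI).trans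
      (Submodule.quotientEquivOfIsCompl P' Ibar hP'.symm)
  set φ : (R ⧸ J) →ₗ[R] (R ⧸ J) :=
    (LinearMap.coprod (Ibar.subtype ∘ₗ θ.toLinearMap) (ρ ∘ₗ P.subtype)) ∘ₗ
      (Submodule.prodEquivOfIsCompl K P hKP).symm.toLinearMap with hφdef
  have hφ_add : ∀ (k : K) (p : P), φ (↑k + ↑p) = ↑(θ k) + ρ ↑p := by
    intro k p
    have hsm : (Submodule.prodEquivOfIsCompl K P hKP).symm (↑k + ↑p) = (k, p) := by
      rw [LinearEquiv.symm_apply_eq]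
      simp [Submodule.coe_prodEquivOfIsCompl]
    simp [hφdef, hsm]
  -- φ is bijective
  have hφinj : Injective φ := by
    rw [← LinearMap.ker_eq_bot, Submodule.eq_bot_iff]
    intro m hm
    obtain ⟨k, p, rfl⟩ := hdecomp m
    rw [LinearMap.mem_ker, hφ_add] at hm
    have hgp : g ↑p = 0 := by
      have h7 : Ibar.mkQ (ρ ↑p) = 0 := by
        have h8 : (ρ ↑p : R ⧸ J) = -↑(θ k) := by
          rw [eq_neg_of_add_eq_zero_right hm]
        rw [h8]
        simpa using (Submodule.Quotient.mk_eq_zero Ibar).mpr (neg_mem (θ k).2)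
      exact h7
    have hpK : (p : R ⧸ J) ∈ K ⊓ P := ⟨hgp, p.2⟩
    rw [hKP.inf_eq_bot, Submodule.mem_bot] at hpK
    have hθk : (θ k : R ⧸ J) = 0 := by
      have := hm
      rw [hpK] at this
      simpa using this
    have hk0 : k = 0 := by
      have : θ k = 0 := Subtype.ext hθk
      simpa using congrArg θ.symm this
    rw [hk0, hpK]
    simp
  have hφsurj : Surjective φ := by
    intro m
    obtain ⟨p, hp⟩ := hPsurj (Ibar.mkQ m)
    have hmem : m - ρ ↑p ∈ Ibar := by
      have h9 : Ibar.mkQ (m - ρ ↑p) = 0 := by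
        have h9a : g ↑p = Ibar.mkQ (ρ ↑p) := rfl
        have hp' : g ↑p = Ibar.mkQ m := hp
        rw [map_sub, ← h9a, hp', sub_self]
      rwa [← Submodule.Quotient.mk_eq_zero Ibar]
    obtain ⟨k, hk⟩ : ∃ k : K, (θ k : R ⧸ J) = m - ρ ↑p := by
      obtain ⟨y, hy⟩ := θ.surjective ⟨m - ρ ↑p, hmem⟩
      exact ⟨y, by rw [hy]⟩
    refine ⟨↑k + ↑p, ?_⟩
    rw [hφ_add, hk]
    abel
  -- φ x - ρ x ∈ Ibar for all x
  have hφρ : ∀ x : R ⧸ J, φ x - ρ x ∈ Ibar := by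
    intro x
    obtain ⟨k, p, rfl⟩ := hdecomp x
    rw [hφ_add, map_add]
    have h10 : φ (↑k + ↑p) - ρ (↑k + ↑p) = ↑(θ k) - ρ ↑k := by
      rw [hφ_add, map_add]; abel
    have h11 : ρ (↑k : R ⧸ J) ∈ Ibar := by
      have hk0 : g ↑k = 0 := k.2
      have : Ibar.mkQ (ρ ↑k) = 0 := hk0
      rwa [← Submodule.Quotient.mk_eq_zero Ibar]
    have h12 : (↑(θ k) : R ⧸ J) + ρ ↑p - (ρ ↑k + ρ ↑p) = ↑(θ k) - ρ ↑k := by abel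
    rw [h12]
    exact sub_mem (θ k).2 h11
  -- choose u with π u = φ (π 1); φ is right multiplication by u
  obtain ⟨u, hu⟩ := Submodule.Quotient.mk_surjective J (φ (π 1))
  have hu' : π u = φ (π 1) := hu
  have hφr : ∀ r : R, φ (π r) = π (r * u) := by
    intro r
    have hπr : π r = r • π 1 := by rw [← map_smul, smul_eq_mul, mul_one]
    rw [hπr, map_smul, ← hu', ← map_smul, smul_eq_mul]
  -- u is a unit
  obtain ⟨m, hm⟩ := hφsurj (π 1)
  obtain ⟨v, rfl⟩ := Submodule.Quotient.mk_surjective J m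
  have hvu : v * u - 1 ∈ J := by
    apply (Submodule.Quotient.eq J).mp
    show π (v * u) = π 1
    rw [← hφr v]
    exact hm
  have hvu_unit : IsUnit (v * u) := by
    have := isUnit_one_sub_of_mem_jacobson (neg_mem hvu)
    rwa [neg_sub, sub_sub_cancel] at this
  obtain ⟨w, hwval⟩ := hvu_unit
  set t : R := ↑w⁻¹ * v with htdef
  have htu : t * u = 1 := by
    rw [htdef, mul_assoc, ← hwval, Units.inv_mul]
  have hut1 : u * t - 1 ∈ J := by
    have hφ0 : φ (π (u * t - 1)) = 0 := by
      rw [hφr]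
      have : (u * t - 1) * u = 0 := by
        have h13 : u * t * u = u := by rw [mul_assoc, htu, mul_one]
        rw [sub_mul, h13, one_mul, sub_self]
      rw [this, map_zero]
    have : π (u * t - 1) = 0 := by
      apply hφinj
      rw [hφ0, map_zero]
    rwa [← Submodule.Quotient.mk_eq_zero J]
  have hut_unit : IsUnit (u * t) := by
    have := isUnit_one_sub_of_mem_jacobson (neg_mem hut1)
    rwa [neg_sub, sub_sub_cancel] at this
  obtain ⟨w₂, hw₂⟩ := hut_unit
  have hus : u * (t * ↑w₂⁻¹) = 1 := by
    rw [← mul_assoc, ← hw₂, Units.mul_inv]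
  have hts : t = t * ↑w₂⁻¹ := by
    calc t = t * (u * (t * ↑w₂⁻¹)) := by rw [hus, mul_one]
    _ = (t * u) * (t * ↑w₂⁻¹) := (mul_assoc t u _).symm
    _ = t * ↑w₂⁻¹ := by rw [htu, one_mul]
  have hut : u * t = 1 := by rw [hts]; exact hus
  have hu_unit : IsUnit u := ⟨⟨u, t, hut, htu⟩, rfl⟩
  -- extract i
  have h14 : π u - π q ∈ Ibar := by
    have := hφρ (π 1)
    rw [hρ 1, one_mul, ← hu'] at this
    exact this
  have h15 : π (u - q) ∈ Ibar := by rwa [map_sub]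
  obtain ⟨i, hiI, hieq⟩ := Submodule.mem_map.mp h15
  have hj : u - q - i ∈ J := (Submodule.Quotient.eq J).mp hieq.symm
  set j : R := u - q - i with hjdef
  have hiq : i + q = u - j := by rw [hjdef]; abel
  have htj : t * j ∈ J := Ideal.mul_mem_left _ _ hj
  have huj : IsUnit (u - j) := by
    have h16 : u - j = u * (1 - t * j) := by
      rw [mul_one_sub, ← mul_assoc, hut, one_mul]
    rw [h16]
    exact hu_unit.mul (isUnit_one_sub_of_mem_jacobson htj)
  exact ⟨i, hiI, by rw [hiq]; exact huj⟩
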